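/- Let h₀ > 0, λ > 0 with λ < (π/(2h₀))², let α = γ = (1/2)[(π/2)² h₀⁻² − λ], let δ > 0 satisfy (π/2)²(1 + δ)⁻² h₀⁻² − λ = α, and let C > 0. Define σ(t) = h₀(1 + δ − (δ/2)e^{−γt}) and w(t,x) = C e^{−αt} cos(πx/(2σ(t))). Then ∂_x w(t, σ(t)) = −C e^{−αt} π/(2σ(t)), and for every ρ with 0 < ρ ≤ δγh₀²/(Cπ) one has σ'(t) ≥ −ρ ∂_x w(t, σ(t)) for all t ≥ 0. -/

import Mathlib

open Real

/-- free-boundary inequality for the explicit supersolution (w, σ). -/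
theorem stmt_15 (h₀ lam α γ δ C : ℝ)
    (hh : 0 < h₀) (hlam : 0 < lam) (hsmall : lam < (π / (2 * h₀)) ^ 2)
    (hα : α = (1 / 2) * ((π / 2) ^ 2 * (h₀ ^ 2)⁻¹ - lam)) (hγ : γ = α)
    (hδ : 0 < δ)
    (hδeq : (π / 2) ^ 2 * ((1 + δ) ^ 2)⁻¹ * (h₀ ^ 2)⁻¹ - lam = α)
    (hC : 0 < C)
    (σ : ℝ → ℝ) (hσ : σ = fun t : ℝ => h₀ * (1 + δ - δ / 2 * Real.exp (-γ * t)))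
    (w : ℝ → ℝ → ℝ)
    (hw : w = fun t x : ℝ => C * Real.exp (-α * t) * Real.cos (π * x / (2 * σ t))) :
    (∀ t : ℝ, deriv (fun y : ℝ => w t y) (σ t)
        = -(C * Real.exp (-α * t) * π / (2 * σ t))) ∧
      ∀ ρ : ℝ, 0 < ρ → ρ ≤ δ * γ * h₀ ^ 2 / (C * π) →
        ∀ t : ℝ, 0 ≤ t → deriv σ t ≥ -ρ * deriv (fun y : ℝ => w t y) (σ t) := by
  have hπ : 0 < π := Real.pi_pos
  have hα0 : 0 < α := by
    rw [hα]
    have : (π / (2 * h₀)) ^ 2 = (π / 2) ^ 2 * (h₀ ^ 2)⁻¹ := by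
      field_simp
    nlinarith [hsmall, this]
  have hγ0 : 0 < γ := hγ ▸ hα0
  -- derivative in x
  have hderiv : ∀ t : ℝ, deriv (fun y : ℝ => w t y) (σ t)
      = -(C * Real.exp (-α * t) * π / (2 * σ t)) := by
    intro t
    by_cases hσ0 : σ t = 0
    · have : (fun y : ℝ => w t y) = fun y : ℝ => C * Real.exp (-α * t) * 1 := by
        funext y
        simp [hw, hσ0, Real.cos_zero]
      rw [this, hσ0]
      simp
    · have h1 : HasDerivAt (fun y : ℝ => π * y / (2 * σ t)) (π / (2 * σ t)) (σ t) := by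
        simpa using ((hasDerivAt_id (σ t)).const_mul π).div_const (2 * σ t)
      have h2 : HasDerivAt (fun y : ℝ => w t y)
          (C * Real.exp (-α * t) * (-Real.sin (π * σ t / (2 * σ t)) * (π / (2 * σ t)))) (σ t) := by
        rw [hw]
        exact (h1.cos).const_mul _
      have harg : π * σ t / (2 * σ t) = π / 2 := by
        field_simp
      rw [h2.deriv, harg, Real.sin_pi_div_two]
      ring
  refine ⟨hderiv, ?_⟩
  intro ρ hρ hρle t ht
  -- derivative of σ
  have hdσ : HasDerivAt σ (h₀ * (δ / 2 * γ * Real.exp (-γ * t))) t := by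
    have he : HasDerivAt (fun s : ℝ => Real.exp (-γ * s)) (Real.exp (-γ * t) * (-γ)) t := by
      simpa using (((hasDerivAt_id t).const_mul (-γ)).exp)
    have : HasDerivAt (fun s : ℝ => 1 + δ - δ / 2 * Real.exp (-γ * s))
        (0 - δ / 2 * (Real.exp (-γ * t) * (-γ))) t :=
      (hasDerivAt_const t (1 + δ)).sub (he.const_mul (δ / 2))
    rw [hσ]
    convert this.const_mul h₀ using 1
    · rfl
    · rfl
    ring
  have hE : 0 < Real.exp (-α * t) := Real.exp_pos _
  have hexple : Real.exp (-γ * t) ≤ 1 := by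
    apply Real.exp_le_one_iff.mpr
    nlinarith
  have hσge : h₀ ≤ σ t := by
    have : σ t = h₀ * (1 + δ - δ / 2 * Real.exp (-γ * t)) := by rw [hσ]
    rw [this]
    nlinarith [mul_nonneg hh.le (mul_nonneg (by linarith : (0:ℝ) ≤ δ / 2)
      (by linarith : (0:ℝ) ≤ 1 - Real.exp (-γ * t)))]
  have hσpos : 0 < σ t := lt_of_lt_of_le hh hσge
  rw [hdσ.deriv, hderiv t, hγ]
  have hρC : ρ * (C * π) ≤ δ * γ * h₀ ^ 2 := by
    rw [le_div_iff₀ (by positivity)] at hρle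
    exact hρle
  rw [hγ] at hρC
  have heq : -ρ * -(C * Real.exp (-α * t) * π / (2 * σ t))
      = ρ * (C * Real.exp (-α * t) * π) / (2 * σ t) := by ring
  rw [ge_iff_le, heq, div_le_iff₀ (by positivity : (0:ℝ) < 2 * σ t)]
  nlinarith [mul_le_mul_of_nonneg_right hσge (le_of_lt (mul_pos (mul_pos hδ hα0) hE)),
    mul_le_mul_of_nonneg_right hρC hE.le, hh.le, hE]
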